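/- The set of images of diversity indices of a fixed rooted phylogenetic X-tree (T, ℓ) is a convex subset of ℝⁿ: if s and t are images of diversity indices and 0 ≤ λ ≤ 1, then λs + (1−λ)t is also the image of a diversity index. -/
import Mathlib


/-- The set of images of diversity indices of a fixed rooted phylogenetic X-tree is
convex: a convex combination of two images of valid coefficient systems (satisfying
the convexity, descent, and neutrality conditions) is again such an image. -/
theorem stmt_6 (X E : Type) [Fintype X] [Fintype E]
    (ℓ : E → ℝ) (hℓ : ∀ e, 0 ≤ ℓ e)
    (P : X → Finset E)                            -- root-to-x path edges
    (N : Set ((X × E) × (X × E)))                 -- neutrality (equality) conditions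
    (Valid : (X → E → ℝ) → Prop)
    (hValid : ∀ γ, Valid γ ↔
      (∀ x e, 0 ≤ γ x e) ∧ (∀ e, ∑ x, γ x e = 1) ∧
      (∀ x e, e ∉ P x → γ x e = 0) ∧
      (∀ p ∈ N, γ p.1.1 p.1.2 = γ p.2.1 p.2.2))
    (γs γt : X → E → ℝ) (hs : Valid γs) (ht : Valid γt)
    (s t : X → ℝ)
    (hsim : ∀ x, s x = ∑ e, γs x e * ℓ e)
    (htim : ∀ x, t x = ∑ e, γt x e * ℓ e)
    (lam : ℝ) (h0 : 0 ≤ lam) (h1 : lam ≤ 1) :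
    ∃ γ : X → E → ℝ, Valid γ ∧
      ∀ x, lam * s x + (1 - lam) * t x = ∑ e, γ x e * ℓ e := by
  rw [hValid] at hs ht
  obtain ⟨hs0, hs1, hs2, hs3⟩ := hs
  obtain ⟨ht0, ht1, ht2, ht3⟩ := ht
  refine ⟨fun x e => lam * γs x e + (1 - lam) * γt x e, ?_, ?_⟩
  · rw [hValid]
    refine ⟨fun x e => add_nonneg (mul_nonneg h0 (hs0 x e))
      (mul_nonneg (by linarith) (ht0 x e)), fun e => ?_, fun x e he => ?_, fun p hp => ?_⟩
    · rw [Finset.sum_add_distrib, ← Finset.mul_sum, ← Finset.mul_sum, hs1, ht1]; ring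
    · rw [hs2 x e he, ht2 x e he]; ring
    · rw [hs3 p hp, ht3 p hp]
  · intro x
    rw [hsim, htim, Finset.mul_sum, Finset.mul_sum, ← Finset.sum_add_distrib]
    exact Finset.sum_congr rfl fun e _ => by ring
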